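/- Let π* be any permutation of [n] and let ε > 0. For any scaling parameters 0 < φ, φ' < 1 with |φ − φ'| ≤ ε/n², the total variation distance satisfies D_TV(M(φ, π*), M(φ', π*)) ≤ ε. -/

import Mathlib

open scoped Classical
open Finset

namespace Mallows

/-- Kendall-tau distance between two permutations of `Fin n`: the number of pairs of
elements whose relative order differs in the two permutations. -/
noncomputable def dKT {n : ℕ} (π σ : Equiv.Perm (Fin n)) : ℕ :=
  (Finset.univ.filter (fun p : Fin n × Fin n =>
    p.1 < p.2 ∧ ¬((π.symm p.1 < π.symm p.2) ↔ (σ.symm p.1 < σ.symm p.2)))).card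

/-- Probability mass function of the Mallows model `M(φ, π₀)`. -/
noncomputable def mallowsPMF {n : ℕ} (φ : ℝ) (π₀ π : Equiv.Perm (Fin n)) : ℝ :=
  φ ^ dKT π π₀ / ∑ σ : Equiv.Perm (Fin n), φ ^ dKT σ π₀

/-- Expectation of `f` under `M(φ, π₀)`. -/
noncomputable def mExp {n : ℕ} (φ : ℝ) (π₀ : Equiv.Perm (Fin n))
    (f : Equiv.Perm (Fin n) → ℝ) : ℝ :=
  ∑ π : Equiv.Perm (Fin n), mallowsPMF φ π₀ π * f π

/-- Probability of the event `A` under `M(φ, π₀)`. -/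
noncomputable def mProb {n : ℕ} (φ : ℝ) (π₀ : Equiv.Perm (Fin n))
    (A : Equiv.Perm (Fin n) → Prop) : ℝ :=
  ∑ π : Equiv.Perm (Fin n), if A π then mallowsPMF φ π₀ π else 0

/-- Total variation distance between two pmfs on permutations of `Fin n`. -/
noncomputable def tvDist {n : ℕ} (p q : Equiv.Perm (Fin n) → ℝ) : ℝ :=
  (∑ π : Equiv.Perm (Fin n), |p π - q π|) / 2

/-- Kullback–Leibler divergence between two pmfs on permutations of `Fin n`. -/
noncomputable def klDiv {n : ℕ} (p q : Equiv.Perm (Fin n) → ℝ) : ℝ :=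
  ∑ π : Equiv.Perm (Fin n), p π * Real.log (p π / q π)

/-- Position vector of a permutation: entry `i` is the position `π⁻¹ i` of element `i`. -/
noncomputable def posVec {n : ℕ} (π : Equiv.Perm (Fin n)) : EuclideanSpace ℝ (Fin n) :=
  WithLp.toLp 2 fun i => ((π.symm i).1 : ℝ)

/-- Front adjustment vector of `π` with respect to `π̂`: entry `i` counts the elements `j`
with `π̂⁻¹ j < π̂⁻¹ i` and `π⁻¹ j > π⁻¹ i`. -/
noncomputable def leftAdj {n : ℕ} (πh π : Equiv.Perm (Fin n)) : EuclideanSpace ℝ (Fin n) :=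
  WithLp.toLp 2 fun i => ((Finset.univ.filter (fun j : Fin n =>
    πh.symm j < πh.symm i ∧ π.symm i < π.symm j)).card : ℝ)

/-- Back adjustment vector of `π` with respect to `π̂`: entry `i` counts the elements `j`
with `π̂⁻¹ j > π̂⁻¹ i` and `π⁻¹ j < π⁻¹ i`. -/
noncomputable def rightAdj {n : ℕ} (πh π : Equiv.Perm (Fin n)) : EuclideanSpace ℝ (Fin n) :=
  WithLp.toLp 2 fun i => ((Finset.univ.filter (fun j : Fin n =>
    πh.symm i < πh.symm j ∧ π.symm j < π.symm i)).card : ℝ)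

section Aux
variable {n : ℕ}
variable {n : ℕ}

private def inwrong (π₀ τ : Equiv.Perm (Fin n)) (u v : Fin n) : Prop :=
  ¬((τ.symm u < τ.symm v) ↔ (π₀.symm u < π₀.symm v))

private lemma dKT_def (π₀ τ : Equiv.Perm (Fin n)) :
    dKT τ π₀ = (univ.filter (fun p : Fin n × Fin n =>
      p.1 < p.2 ∧ inwrong π₀ τ p.1 p.2)).card := by
  unfold dKT inwrong
  congr!

private lemma vne {x y : Fin n} (h : x ≠ y) : (x : ℕ) ≠ (y : ℕ) :=
  fun hv => h (Fin.val_injective hv)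

private lemma inwrong_iff (π₀ τ : Equiv.Perm (Fin n)) (u v : Fin n) :
    inwrong π₀ τ u v ↔
      ¬(((τ.symm u : ℕ) < (τ.symm v : ℕ)) ↔ ((π₀.symm u : ℕ) < (π₀.symm v : ℕ))) :=
  Iff.rfl

private lemma inwrong_ne {π₀ τ : Equiv.Perm (Fin n)} {u v : Fin n}
    (h : inwrong π₀ τ u v) : u ≠ v := by
  rintro rfl; exact h (iff_of_false (lt_irrefl _) (lt_irrefl _))

private lemma inwrong_symm {π₀ τ : Equiv.Perm (Fin n)} {u v : Fin n}
    (h : inwrong π₀ τ u v) : inwrong π₀ τ v u := by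
  have hne := inwrong_ne h
  have d1 : ((τ.symm u : ℕ)) ≠ (τ.symm v : ℕ) := vne (τ.symm.injective.ne hne)
  have d2 : ((π₀.symm u : ℕ)) ≠ (π₀.symm v : ℕ) := vne (π₀.symm.injective.ne hne)
  rw [inwrong_iff] at h ⊢
  omega

private lemma dKT_double (π₀ τ : Equiv.Perm (Fin n)) :
    (univ.filter (fun p : Fin n × Fin n => inwrong π₀ τ p.1 p.2)).card = 2 * dKT τ π₀ := by
  classical
  have hsplit : (univ.filter (fun p : Fin n × Fin n => inwrong π₀ τ p.1 p.2))
      = (univ.filter (fun p : Fin n × Fin n => p.1 < p.2 ∧ inwrong π₀ τ p.1 p.2))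
        ∪ (univ.filter (fun p : Fin n × Fin n => p.2 < p.1 ∧ inwrong π₀ τ p.1 p.2)) := by
    ext p
    simp only [mem_filter, mem_union, mem_univ, true_and]
    constructor
    · intro hp
      rcases (inwrong_ne hp).lt_or_gt with h | h
      · exact Or.inl ⟨h, hp⟩
      · exact Or.inr ⟨h, hp⟩
    · rintro (⟨_, hp⟩ | ⟨_, hp⟩) <;> exact hp
  have hdisj : Disjoint
      (univ.filter (fun p : Fin n × Fin n => p.1 < p.2 ∧ inwrong π₀ τ p.1 p.2))
      (univ.filter (fun p : Fin n × Fin n => p.2 < p.1 ∧ inwrong π₀ τ p.1 p.2)) := by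
    rw [Finset.disjoint_left]
    intro p hp hp'
    simp only [mem_filter] at hp hp'
    exact absurd hp'.2.1 (lt_asymm hp.2.1)
  have hcard : (univ.filter (fun p : Fin n × Fin n => p.2 < p.1 ∧ inwrong π₀ τ p.1 p.2)).card
      = (univ.filter (fun p : Fin n × Fin n => p.1 < p.2 ∧ inwrong π₀ τ p.1 p.2)).card := by
    apply Finset.card_bij' (fun p _ => Prod.swap p) (fun p _ => Prod.swap p)
    · intro p hp
      simp only [mem_filter, mem_univ, true_and, Prod.fst_swap, Prod.snd_swap] at hp ⊢
      exact ⟨hp.1, inwrong_symm hp.2⟩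
    · intro p hp
      simp only [mem_filter, mem_univ, true_and, Prod.fst_swap, Prod.snd_swap] at hp ⊢
      exact ⟨hp.1, inwrong_symm hp.2⟩
    · intro p _; simp
    · intro p _; simp
  rw [hsplit, Finset.card_union_of_disjoint hdisj, hcard, dKT_def]
  ring

/-- the contradiction in the mixed case of the injectivity argument -/
private lemma mixed_aux (π₀ π : Equiv.Perm (Fin n)) {x y : Fin n} (hxyne : x ≠ y)
    (hinv : ¬((π.symm x < π.symm y) ↔ (π₀.symm x < π₀.symm y)))
    {u v : Fin n}
    (hq2 : inwrong π₀ (Equiv.swap x y * π) u v)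
    (hq1 : inwrong π₀ (Equiv.swap x y * π) (Equiv.swap x y u) (Equiv.swap x y v))
    (hb1 : inwrong π₀ π (Equiv.swap x y u) (Equiv.swap x y v))
    (hb2 : ¬ inwrong π₀ π u v) : False := by
  classical
  have hσs : ∀ w, (Equiv.swap x y * π).symm w = π.symm (Equiv.swap x y w) := by
    intro w
    simp [Equiv.Perm.mul_def, Equiv.symm_trans_apply]
  have hss : ∀ w, Equiv.swap x y (Equiv.swap x y w) = w := fun w => Equiv.swap_apply_self x y w
  have huv : u ≠ v := inwrong_ne hq2
  have hinvN : ¬(((π.symm x : ℕ) < (π.symm y : ℕ)) ↔ ((π₀.symm x : ℕ) < (π₀.symm y : ℕ))) := hinv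
  have dij : ((π.symm x : ℕ)) ≠ (π.symm y : ℕ) := vne (π.symm.injective.ne hxyne)
  have dfxy : ((π₀.symm x : ℕ)) ≠ (π₀.symm y : ℕ) := vne (π₀.symm.injective.ne hxyne)
  have hq2N : ¬(((π.symm (Equiv.swap x y u) : ℕ) < (π.symm (Equiv.swap x y v) : ℕ)) ↔
      ((π₀.symm u : ℕ) < (π₀.symm v : ℕ))) := by
    have := (inwrong_iff π₀ _ u v).1 hq2
    rwa [hσs, hσs] at this
  have hq1N : ¬(((π.symm u : ℕ) < (π.symm v : ℕ)) ↔
      ((π₀.symm (Equiv.swap x y u) : ℕ) < (π₀.symm (Equiv.swap x y v) : ℕ))) := by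
    have := (inwrong_iff π₀ _ _ _).1 hq1
    rwa [hσs, hσs, hss, hss] at this
  have hb1N : ¬(((π.symm (Equiv.swap x y u) : ℕ) < (π.symm (Equiv.swap x y v) : ℕ)) ↔
      ((π₀.symm (Equiv.swap x y u) : ℕ) < (π₀.symm (Equiv.swap x y v) : ℕ))) := hb1
  have hb2N : (((π.symm u : ℕ) < (π.symm v : ℕ)) ↔
      ((π₀.symm u : ℕ) < (π₀.symm v : ℕ))) := not_not.mp hb2
  by_cases hux : x = u
  · subst hux
    by_cases hvy : y = v
    · subst hvy
      rw [Equiv.swap_apply_left, Equiv.swap_apply_right] at hq2N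
      omega
    · have hvx : x ≠ v := huv
      have hsv : Equiv.swap x y v = v := Equiv.swap_apply_of_ne_of_ne (Ne.symm hvx) (Ne.symm hvy)
      rw [Equiv.swap_apply_left, hsv] at hq2N hq1N hb1N
      omega
  · by_cases huy : y = u
    · subst huy
      by_cases hvx : x = v
      · subst hvx
        rw [Equiv.swap_apply_right, Equiv.swap_apply_left] at hq2N
        omega
      · have hvy : y ≠ v := huv
        have hsv : Equiv.swap x y v = v := Equiv.swap_apply_of_ne_of_ne (Ne.symm hvx) (Ne.symm hvy)
        rw [Equiv.swap_apply_right, hsv] at hq2N hq1N hb1N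
        omega
    · have hsu : Equiv.swap x y u = u := Equiv.swap_apply_of_ne_of_ne (Ne.symm hux) (Ne.symm huy)
      by_cases hvx : x = v
      · subst hvx
        rw [hsu, Equiv.swap_apply_left] at hq2N hq1N hb1N
        omega
      · by_cases hvy : y = v
        · subst hvy
          rw [hsu, Equiv.swap_apply_right] at hq2N hq1N hb1N
          omega
        · have hsv : Equiv.swap x y v = v :=
            Equiv.swap_apply_of_ne_of_ne (Ne.symm hvx) (Ne.symm hvy)
          rw [hsu, hsv] at hb1N
          omega

private lemma key (π₀ π : Equiv.Perm (Fin n)) {x y : Fin n} (hxy : x < y)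
    (hinv : ¬((π.symm x < π.symm y) ↔ (π₀.symm x < π₀.symm y))) :
    dKT (Equiv.swap x y * π) π₀ + 1 ≤ dKT π π₀ := by
  classical
  have hxyne : x ≠ y := ne_of_lt hxy
  have hσs : ∀ w, (Equiv.swap x y * π).symm w = π.symm (Equiv.swap x y w) := by
    intro w
    simp [Equiv.Perm.mul_def, Equiv.symm_trans_apply]
  have hinvN : ¬(((π.symm x : ℕ) < (π.symm y : ℕ)) ↔ ((π₀.symm x : ℕ) < (π₀.symm y : ℕ))) := hinv
  have dij : ((π.symm x : ℕ)) ≠ (π.symm y : ℕ) := vne (π.symm.injective.ne hxyne)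
  have dfxy : ((π₀.symm x : ℕ)) ≠ (π₀.symm y : ℕ) := vne (π₀.symm.injective.ne hxyne)
  set σ : Equiv.Perm (Fin n) := Equiv.swap x y * π with hσ
  set Aσ := univ.filter (fun p : Fin n × Fin n => inwrong π₀ σ p.1 p.2) with hAσ
  set Aπ := univ.filter (fun p : Fin n × Fin n => inwrong π₀ π p.1 p.2) with hAπ
  set G : Fin n × Fin n → Fin n × Fin n :=
    fun p => if inwrong π₀ π p.1 p.2 then p else (Equiv.swap x y p.1, Equiv.swap x y p.2) with hGd
  have hGdef : ∀ u v : Fin n,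
      G (u, v) = if inwrong π₀ π u v then (u, v) else (Equiv.swap x y u, Equiv.swap x y v) :=
    fun u v => rfl
  have hIσN : ∀ u v : Fin n, inwrong π₀ σ u v →
      ¬(((π.symm (Equiv.swap x y u) : ℕ) < (π.symm (Equiv.swap x y v) : ℕ)) ↔
        ((π₀.symm u : ℕ) < (π₀.symm v : ℕ))) := by
    intro u v h
    have := (inwrong_iff π₀ σ u v).1 h
    rwa [hσ, hσs, hσs] at this
  have hxyAσ : ¬ inwrong π₀ σ x y := by
    intro h
    have := hIσN x y h
    rw [Equiv.swap_apply_left, Equiv.swap_apply_right] at this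
    omega
  have hyxAσ : ¬ inwrong π₀ σ y x := by
    intro h
    have := hIσN y x h
    rw [Equiv.swap_apply_left, Equiv.swap_apply_right] at this
    omega
  have hmaps : ∀ p ∈ Aσ, G p ∈ Aπ \ {((x,y) : Fin n × Fin n), (y,x)} := by
    rintro ⟨u, v⟩ hp
    simp only [hAσ, mem_filter, mem_univ, true_and] at hp
    have hpw : inwrong π₀ σ u v := hp
    have huv : u ≠ v := inwrong_ne hpw
    have hqN := hIσN u v hpw
    simp only [mem_sdiff, mem_insert, mem_singleton, hAπ, mem_filter, mem_univ, true_and]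
    rw [hGdef u v]
    by_cases hb : inwrong π₀ π u v
    · rw [if_pos hb]
      refine ⟨hb, ?_⟩
      rintro (h' | h')
      · injection h' with h1 h2; subst h1; subst h2
        exact hxyAσ hpw
      · injection h' with h1 h2; subst h1; subst h2
        exact hyxAσ hpw
    · rw [if_neg hb]
      have hbN : (((π.symm u : ℕ) < (π.symm v : ℕ)) ↔
          ((π₀.symm u : ℕ) < (π₀.symm v : ℕ))) := not_not.mp hb
      constructor
      · -- show inwrong π₀ π (swap u) (swap v)
        show inwrong π₀ π (Equiv.swap x y u) (Equiv.swap x y v)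
        rw [inwrong_iff]
        by_cases hux : x = u
        · subst hux
          by_cases hvy : y = v
          · subst hvy
            rw [Equiv.swap_apply_left, Equiv.swap_apply_right] at hqN ⊢
            omega
          · have hsv : Equiv.swap x y v = v :=
              Equiv.swap_apply_of_ne_of_ne (Ne.symm huv) (Ne.symm hvy)
            rw [Equiv.swap_apply_left, hsv] at hqN ⊢
            omega
        · by_cases huy : y = u
          · subst huy
            by_cases hvx : x = v
            · subst hvx
              rw [Equiv.swap_apply_right, Equiv.swap_apply_left] at hqN ⊢
              omega
            · have hsv : Equiv.swap x y v = v :=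
                Equiv.swap_apply_of_ne_of_ne (Ne.symm hvx) (Ne.symm huv)
              rw [Equiv.swap_apply_right, hsv] at hqN ⊢
              omega
          · have hsu : Equiv.swap x y u = u :=
              Equiv.swap_apply_of_ne_of_ne (Ne.symm hux) (Ne.symm huy)
            by_cases hvx : x = v
            · subst hvx
              rw [hsu, Equiv.swap_apply_left] at hqN ⊢
              omega
            · by_cases hvy : y = v
              · subst hvy
                rw [hsu, Equiv.swap_apply_right] at hqN ⊢
                omega
              · have hsv : Equiv.swap x y v = v :=
                  Equiv.swap_apply_of_ne_of_ne (Ne.symm hvx) (Ne.symm hvy)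
                rw [hsu, hsv] at hqN ⊢
                omega
      · -- (swap u, swap v) ∉ {(x,y),(y,x)}
        rintro (h' | h')
        · injection h' with h1 h2
          have hu : u = y := by
            have := congrArg (Equiv.swap x y) h1
            rwa [Equiv.swap_apply_self, Equiv.swap_apply_left] at this
          have hv : v = x := by
            have := congrArg (Equiv.swap x y) h2
            rwa [Equiv.swap_apply_self, Equiv.swap_apply_right] at this
          subst hu; subst hv
          exact hyxAσ hpw
        · injection h' with h1 h2
          have hu : u = x := by
            have := congrArg (Equiv.swap x y) h1
            rwa [Equiv.swap_apply_self, Equiv.swap_apply_right] at this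
          have hv : v = y := by
            have := congrArg (Equiv.swap x y) h2
            rwa [Equiv.swap_apply_self, Equiv.swap_apply_left] at this
          subst hu; subst hv
          exact hxyAσ hpw
  have hinj : Set.InjOn G Aσ := by
    rintro ⟨u1, v1⟩ hp1 ⟨u2, v2⟩ hp2 heq
    have hp1' : inwrong π₀ σ u1 v1 := by
      have : (u1, v1) ∈ Aσ := hp1
      simp only [hAσ, mem_filter, mem_univ, true_and] at this
      exact this
    have hp2' : inwrong π₀ σ u2 v2 := by
      have : (u2, v2) ∈ Aσ := hp2
      simp only [hAσ, mem_filter, mem_univ, true_and] at this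
      exact this
    rw [hGdef u1 v1, hGdef u2 v2] at heq
    by_cases hb1 : inwrong π₀ π u1 v1 <;> by_cases hb2 : inwrong π₀ π u2 v2
    · simpa only [if_pos hb1, if_pos hb2] using heq
    · simp only [if_pos hb1, if_neg hb2] at heq
      exfalso
      injection heq with h1 h2
      subst h1; subst h2
      exact mixed_aux π₀ π hxyne hinv hp2' hp1' hb1 hb2
    · simp only [if_neg hb1, if_pos hb2] at heq
      exfalso
      injection heq.symm with h1 h2
      subst h1; subst h2
      exact mixed_aux π₀ π hxyne hinv hp1' hp2' hb2 hb1
    · simp only [if_neg hb1, if_neg hb2] at heq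
      injection heq with h1 h2
      have e1 : u1 = u2 := (Equiv.swap x y).injective h1
      have e2 : v1 = v2 := (Equiv.swap x y).injective h2
      rw [e1, e2]
  have hsub : ({((x,y) : Fin n × Fin n), (y,x)} : Finset (Fin n × Fin n)) ⊆ Aπ := by
    intro p hp
    simp only [mem_insert, mem_singleton] at hp
    simp only [hAπ, mem_filter, mem_univ, true_and]
    rcases hp with rfl | rfl
    · exact hinv
    · show inwrong π₀ π y x
      rw [inwrong_iff]
      omega
  have hpairs : ({((x,y) : Fin n × Fin n), (y,x)} : Finset (Fin n × Fin n)).card = 2 := by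
    rw [Finset.card_insert_of_notMem, Finset.card_singleton]
    simp only [mem_singleton, Prod.mk.injEq]
    rintro ⟨rfl, -⟩
    exact hxyne rfl
  have hcard1 : Aσ.card ≤ (Aπ \ {((x,y) : Fin n × Fin n), (y,x)}).card :=
    Finset.card_le_card_of_injOn G hmaps hinj
  have hcard2 : (Aπ \ {((x,y) : Fin n × Fin n), (y,x)}).card = Aπ.card - 2 := by
    rw [Finset.card_sdiff_of_subset hsub, hpairs]
  have hcard3 : 2 ≤ Aπ.card := hpairs ▸ Finset.card_le_card hsub
  have hAσd : Aσ.card = 2 * dKT σ π₀ := dKT_double π₀ σ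
  have hAπd : Aπ.card = 2 * dKT π π₀ := dKT_double π₀ π
  omega

variable {n : ℕ}


private lemma pow_sub_pow_le' {a b : ℝ} (ha : 0 ≤ a) (hab : a ≤ b) :
    ∀ m : ℕ, b ^ (m + 1) - a ^ (m + 1) ≤ (b - a) * ((m + 1 : ℝ) * b ^ m)
  | 0 => by simp
  | (m + 1) => by
    have ih := pow_sub_pow_le' ha hab m
    have hb0 : 0 ≤ b := ha.trans hab
    have h3 : a ^ (m + 1) ≤ b ^ (m + 1) := pow_le_pow_left₀ ha hab _
    have hba : 0 ≤ b - a := sub_nonneg.2 hab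
    calc b ^ (m + 1 + 1) - a ^ (m + 1 + 1)
        = b * (b ^ (m + 1) - a ^ (m + 1)) + (b - a) * a ^ (m + 1) := by ring
      _ ≤ b * ((b - a) * ((m + 1 : ℝ) * b ^ m)) + (b - a) * b ^ (m + 1) := by
          exact add_le_add (mul_le_mul_of_nonneg_left ih hb0)
            (mul_le_mul_of_nonneg_left h3 hba)
      _ = (b - a) * (((m + 1 : ℕ) + 1 : ℝ) * b ^ (m + 1)) := by push_cast; ring

private lemma per_pi (π₀ π : Equiv.Perm (Fin n)) {a b : ℝ} (ha : 0 ≤ a) (hab : a ≤ b)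
    (hb1 : b ≤ 1) :
    b ^ dKT π π₀ - a ^ dKT π π₀
      ≤ (b - a) * ∑ q : Fin n × Fin n, b ^ dKT (Equiv.swap q.1 q.2 * π) π₀ := by
  have hb0 : 0 ≤ b := ha.trans hab
  have hba : 0 ≤ b - a := sub_nonneg.2 hab
  have hsum0 : 0 ≤ ∑ q : Fin n × Fin n, b ^ dKT (Equiv.swap q.1 q.2 * π) π₀ :=
    Finset.sum_nonneg fun q _ => pow_nonneg hb0 _
  rcases Nat.eq_zero_or_pos (dKT π π₀) with hd | hd
  · rw [hd]
    simp only [pow_zero, sub_self]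
    exact mul_nonneg hba hsum0
  · obtain ⟨m, hm⟩ : ∃ m, dKT π π₀ = m + 1 := ⟨dKT π π₀ - 1, by omega⟩
    rw [hm]
    refine (pow_sub_pow_le' ha hab m).trans (mul_le_mul_of_nonneg_left ?_ hba)
    set F := univ.filter (fun p : Fin n × Fin n =>
      p.1 < p.2 ∧ ¬((π.symm p.1 < π.symm p.2) ↔ (π₀.symm p.1 < π₀.symm p.2))) with hF
    have hcard : F.card = m + 1 := hm
    have h1 : ((m + 1 : ℝ)) * b ^ m = ∑ _q ∈ F, b ^ m := by
      rw [Finset.sum_const, hcard, nsmul_eq_mul]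
      push_cast
      ring
    rw [h1]
    have step1 : ∑ _q ∈ F, b ^ m ≤ ∑ q ∈ F, b ^ dKT (Equiv.swap q.1 q.2 * π) π₀ := by
      apply Finset.sum_le_sum
      intro q hq
      rw [hF, mem_filter] at hq
      have hk := key π₀ π hq.2.1 hq.2.2
      exact pow_le_pow_of_le_one hb0 hb1 (by omega)
    have step2 : ∑ q ∈ F, b ^ dKT (Equiv.swap q.1 q.2 * π) π₀
        ≤ ∑ q : Fin n × Fin n, b ^ dKT (Equiv.swap q.1 q.2 * π) π₀ :=
      Finset.sum_le_sum_of_subset_of_nonneg (Finset.filter_subset _ _)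
        (fun q _ _ => pow_nonneg hb0 _)
    exact step1.trans step2

private lemma sum_reindex (π₀ : Equiv.Perm (Fin n)) (b : ℝ) (g : Equiv.Perm (Fin n)) :
    ∑ π : Equiv.Perm (Fin n), b ^ dKT (g * π) π₀
      = ∑ π : Equiv.Perm (Fin n), b ^ dKT π π₀ := by
  have := Equiv.sum_comp (Equiv.mulLeft g) (fun τ : Equiv.Perm (Fin n) => b ^ dKT τ π₀)
  simpa using this

private lemma sum_bound (π₀ : Equiv.Perm (Fin n)) {a b : ℝ} (ha : 0 ≤ a) (hab : a ≤ b)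
    (hb1 : b ≤ 1) :
    (∑ π : Equiv.Perm (Fin n), b ^ dKT π π₀) - (∑ π : Equiv.Perm (Fin n), a ^ dKT π π₀)
      ≤ (b - a) * ((n : ℝ) ^ 2 * ∑ π : Equiv.Perm (Fin n), b ^ dKT π π₀) := by
  rw [← Finset.sum_sub_distrib]
  calc ∑ π : Equiv.Perm (Fin n), (b ^ dKT π π₀ - a ^ dKT π π₀)
      ≤ ∑ π : Equiv.Perm (Fin n),
          (b - a) * ∑ q : Fin n × Fin n, b ^ dKT (Equiv.swap q.1 q.2 * π) π₀ :=
        Finset.sum_le_sum fun π _ => per_pi π₀ π ha hab hb1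
    _ = (b - a) * ∑ π : Equiv.Perm (Fin n),
          ∑ q : Fin n × Fin n, b ^ dKT (Equiv.swap q.1 q.2 * π) π₀ := by
        rw [Finset.mul_sum]
    _ = (b - a) * ∑ q : Fin n × Fin n,
          ∑ π : Equiv.Perm (Fin n), b ^ dKT (Equiv.swap q.1 q.2 * π) π₀ := by
        rw [Finset.sum_comm]
    _ = (b - a) * ∑ _q : Fin n × Fin n, ∑ π : Equiv.Perm (Fin n), b ^ dKT π π₀ := by
        congr 1
        exact Finset.sum_congr rfl fun q _ => sum_reindex π₀ b (Equiv.swap q.1 q.2)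
    _ = (b - a) * ((n : ℝ) ^ 2 * ∑ π : Equiv.Perm (Fin n), b ^ dKT π π₀) := by
        rw [Finset.sum_const, nsmul_eq_mul]
        congr 2
        rw [Finset.card_univ, Fintype.card_prod, Fintype.card_fin]
        push_cast
        ring

private lemma tv_aux (π₀ : Equiv.Perm (Fin n)) {a b : ℝ} (ha : 0 < a) (hab : a ≤ b)
    (hb1 : b ≤ 1) :
    tvDist (mallowsPMF a π₀) (mallowsPMF b π₀) ≤ (b - a) * (n : ℝ) ^ 2 := by
  have hb0 : 0 < b := ha.trans_le hab
  have hZa0 : 0 < ∑ σ : Equiv.Perm (Fin n), a ^ dKT σ π₀ :=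
    Finset.sum_pos (fun σ _ => pow_pos ha _) Finset.univ_nonempty
  have hZb0 : 0 < ∑ σ : Equiv.Perm (Fin n), b ^ dKT σ π₀ :=
    Finset.sum_pos (fun σ _ => pow_pos hb0 _) Finset.univ_nonempty
  set Za := ∑ σ : Equiv.Perm (Fin n), a ^ dKT σ π₀ with hZa
  set Zb := ∑ σ : Equiv.Perm (Fin n), b ^ dKT σ π₀ with hZb
  have hZZ : Za ≤ Zb := Finset.sum_le_sum fun σ _ => pow_le_pow_left₀ ha.le hab _
  have hkey : Zb - Za ≤ (b - a) * ((n : ℝ) ^ 2 * Zb) := sum_bound π₀ ha.le hab hb1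
  have hpt : ∀ π : Equiv.Perm (Fin n),
      |mallowsPMF a π₀ π - mallowsPMF b π₀ π|
        ≤ (a ^ dKT π π₀ / Za - a ^ dKT π π₀ / Zb)
          + (b ^ dKT π π₀ / Zb - a ^ dKT π π₀ / Zb) := by
    intro π
    have hpow0 : (0:ℝ) ≤ a ^ dKT π π₀ := pow_nonneg ha.le _
    have h1 : a ^ dKT π π₀ / Zb ≤ a ^ dKT π π₀ / Za :=
      div_le_div_of_nonneg_left hpow0 hZa0 hZZ
    have h2 : a ^ dKT π π₀ / Zb ≤ b ^ dKT π π₀ / Zb :=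
      div_le_div_of_nonneg_right (pow_le_pow_left₀ ha.le hab _) hZb0.le
    have hma : mallowsPMF a π₀ π = a ^ dKT π π₀ / Za := rfl
    have hmb : mallowsPMF b π₀ π = b ^ dKT π π₀ / Zb := rfl
    rw [hma, hmb, abs_sub_le_iff]
    constructor <;> linarith
  have hsum : ∑ π : Equiv.Perm (Fin n), |mallowsPMF a π₀ π - mallowsPMF b π₀ π|
      ≤ 2 * ((Zb - Za) / Zb) := by
    calc ∑ π : Equiv.Perm (Fin n), |mallowsPMF a π₀ π - mallowsPMF b π₀ π|
        ≤ ∑ π : Equiv.Perm (Fin n),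
            ((a ^ dKT π π₀ / Za - a ^ dKT π π₀ / Zb)
              + (b ^ dKT π π₀ / Zb - a ^ dKT π π₀ / Zb)) :=
          Finset.sum_le_sum fun π _ => hpt π
      _ = (Za / Za - Za / Zb) + (Zb / Zb - Za / Zb) := by
          rw [Finset.sum_add_distrib, Finset.sum_sub_distrib, Finset.sum_sub_distrib,
            ← Finset.sum_div, ← Finset.sum_div, ← Finset.sum_div, ← hZa, ← hZb]
      _ = 2 * ((Zb - Za) / Zb) := by
          rw [div_self hZa0.ne', div_self hZb0.ne']
          field_simp
          ring
    
  have hfrac : (Zb - Za) / Zb ≤ (b - a) * (n : ℝ) ^ 2 := by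
    rw [div_le_iff₀ hZb0]
    calc Zb - Za ≤ (b - a) * ((n : ℝ) ^ 2 * Zb) := hkey
      _ = (b - a) * (n : ℝ) ^ 2 * Zb := by ring
  have : tvDist (mallowsPMF a π₀) (mallowsPMF b π₀)
      = (∑ π : Equiv.Perm (Fin n), |mallowsPMF a π₀ π - mallowsPMF b π₀ π|) / 2 := rfl
  rw [this]
  linarith

private theorem tv_close_scaling' (π₀ : Equiv.Perm (Fin n)) (ε φ φ' : ℝ) (hε : 0 < ε)
    (hφ0 : 0 < φ) (hφ1 : φ < 1) (hφ'0 : 0 < φ') (hφ'1 : φ' < 1)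
    (h : |φ - φ'| ≤ ε / (n : ℝ) ^ 2) :
    tvDist (mallowsPMF φ π₀) (mallowsPMF φ' π₀) ≤ ε := by
  have hmul : ∀ δ : ℝ, 0 ≤ δ → δ ≤ ε / (n : ℝ) ^ 2 → δ * (n : ℝ) ^ 2 ≤ ε := by
    intro δ h0 h1
    rcases Nat.eq_zero_or_pos n with hn | hn
    · subst hn
      simpa using hε.le
    · have hn2 : (0:ℝ) < (n : ℝ) ^ 2 := by positivity
      calc δ * (n : ℝ) ^ 2 ≤ (ε / (n : ℝ) ^ 2) * (n : ℝ) ^ 2 :=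
            mul_le_mul_of_nonneg_right h1 hn2.le
        _ = ε := div_mul_cancel₀ _ hn2.ne'
  rcases le_total φ φ' with hle | hle
  · have h1 := tv_aux π₀ hφ0 hle hφ'1.le
    refine h1.trans (hmul _ (sub_nonneg.2 hle) ?_)
    rwa [abs_sub_comm, abs_of_nonneg (sub_nonneg.2 hle)] at h
  · have h1 := tv_aux π₀ hφ'0 hle hφ1.le
    have hsymm : tvDist (mallowsPMF φ π₀) (mallowsPMF φ' π₀)
        = tvDist (mallowsPMF φ' π₀) (mallowsPMF φ π₀) := by
      unfold tvDist
      congr 1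
      exact Finset.sum_congr rfl fun π _ => abs_sub_comm _ _
    rw [hsymm]
    refine h1.trans (hmul _ (sub_nonneg.2 hle) ?_)
    rwa [abs_of_nonneg (sub_nonneg.2 hle)] at h

end Aux

/-- TV continuity in the scaling parameter. If `|φ - φ'| ≤ ε / n²`
then `D_TV(M(φ, π₀), M(φ', π₀)) ≤ ε`. -/
theorem tv_close_scaling (n : ℕ) (π₀ : Equiv.Perm (Fin n)) (ε φ φ' : ℝ) (hε : 0 < ε)
    (hφ0 : 0 < φ) (hφ1 : φ < 1) (hφ'0 : 0 < φ') (hφ'1 : φ' < 1)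
    (h : |φ - φ'| ≤ ε / (n : ℝ) ^ 2) :
    tvDist (mallowsPMF φ π₀) (mallowsPMF φ' π₀) ≤ ε :=
  tv_close_scaling' π₀ ε φ φ' hε hφ0 hφ1 hφ'0 hφ'1 h

end Mallows
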